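/- For every 0 < β ≤ 1, every δ with β ≤ δ ≤ 1, and all real numbers a, b ≥ 0, one has 0 ≤ (a+b)^{1+β} − a^{1+β} − b^{1+β} ≤ (1+β)·a^δ·b^{1+β−δ}. -/

import Mathlib

open Real Set

lemma rsub {x y p : ℝ} (hx : 0 ≤ x) (hy : 0 ≤ y) (hp : 0 ≤ p) (hp1 : p ≤ 1) :
    (x + y) ^ p ≤ x ^ p + y ^ p := by
  have := NNReal.rpow_add_le_add_rpow ⟨x, hx⟩ ⟨y, hy⟩ hp hp1
  have h2 := NNReal.coe_le_coe.2 this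
  push_cast at h2
  exact h2

lemma rsuper {x y p : ℝ} (hx : 0 ≤ x) (hy : 0 ≤ y) (hp : 1 ≤ p) :
    x ^ p + y ^ p ≤ (x + y) ^ p := by
  have := NNReal.add_rpow_le_rpow_add ⟨x, hx⟩ ⟨y, hy⟩ hp
  have h2 := NNReal.coe_le_coe.2 this
  push_cast at h2
  exact h2

lemma keylem {β a b : ℝ} (hβ0 : 0 < β) (hβ1 : β ≤ 1) (ha : 0 ≤ a) (hb : 0 ≤ b) :
    (a + b) ^ (1 + β) - a ^ (1 + β) - b ^ (1 + β) ≤ (1 + β) * a * b ^ β := by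
  set g : ℝ → ℝ := fun x => (1 + β) * x * b ^ β + x ^ (1 + β) + b ^ (1 + β) - (x + b) ^ (1 + β)
    with hg
  have hp1 : (1 : ℝ) ≤ 1 + β := by linarith
  have hder : ∀ x : ℝ, HasDerivAt g
      ((1 + β) * b ^ β + (1 + β) * x ^ ((1 + β) - 1) - (1 + β) * (x + b) ^ ((1 + β) - 1)) x := by
    intro x
    have h1 : HasDerivAt (fun x : ℝ => (1 + β) * x * b ^ β) ((1 + β) * b ^ β) x := by
      have := (hasDerivAt_id x).const_mul (1 + β)
      simpa [mul_comm, mul_assoc, mul_left_comm] using this.mul_const (b ^ β)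
    have h2 : HasDerivAt (fun x : ℝ => x ^ (1 + β)) ((1 + β) * x ^ ((1 + β) - 1)) x :=
      Real.hasDerivAt_rpow_const (Or.inr hp1)
    have h3 : HasDerivAt (fun x : ℝ => (x + b) ^ (1 + β))
        ((1 + β) * (x + b) ^ ((1 + β) - 1)) x := by
      have hi : HasDerivAt (fun x : ℝ => x + b) 1 x := (hasDerivAt_id x).add_const b
      have := (Real.hasDerivAt_rpow_const (p := 1 + β) (x := x + b) (Or.inr hp1)).comp x hi
      exact this.congr_deriv (mul_one _)
    exact ((h1.add h2).add_const (b ^ (1 + β))).sub h3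
  have hmono : MonotoneOn g (Ici (0 : ℝ)) := by
    apply monotoneOn_of_deriv_nonneg (convex_Ici 0)
    · exact fun x _ => ((hder x).continuousAt).continuousWithinAt
    · exact fun x _ => ((hder x).differentiableAt).differentiableWithinAt
    · intro x hx
      rw [interior_Ici] at hx
      rw [(hder x).deriv]
      have hxx : (0 : ℝ) < x := hx
      have hsub : (x + b) ^ β ≤ x ^ β + b ^ β := rsub hxx.le hb hβ0.le hβ1
      have he : (1 : ℝ) + β - 1 = β := by ring
      rw [he]
      nlinarith [hsub, hβ0]
  have h0 : g 0 = 0 := by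
    simp [hg, Real.zero_rpow (by positivity : (1:ℝ) + β ≠ 0)]
  have := hmono (le_refl (0:ℝ)) (mem_Ici.2 ha) ha
  rw [h0] at this
  simp only [hg] at this
  linarith

/-- Elementary inequality (3.4): for `0 < β ≤ 1`, `β ≤ δ ≤ 1` and `a, b ≥ 0`,
`0 ≤ (a+b)^{1+β} − a^{1+β} − b^{1+β} ≤ (1+β) a^δ b^{1+β−δ}`. -/
theorem stmt0 (β δ a b : ℝ) (hβ0 : 0 < β) (hβ1 : β ≤ 1) (hδl : β ≤ δ) (hδu : δ ≤ 1)
    (ha : 0 ≤ a) (hb : 0 ≤ b) :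
    0 ≤ (a + b) ^ (1 + β) - a ^ (1 + β) - b ^ (1 + β) ∧
      (a + b) ^ (1 + β) - a ^ (1 + β) - b ^ (1 + β) ≤ (1 + β) * a ^ δ * b ^ (1 + β - δ) := by
  have hp1 : (1 : ℝ) ≤ 1 + β := by linarith
  have hlow : 0 ≤ (a + b) ^ (1 + β) - a ^ (1 + β) - b ^ (1 + β) := by
    have := rsuper ha hb hp1
    linarith
  refine ⟨hlow, ?_⟩
  -- degenerate cases
  rcases eq_or_lt_of_le hb with hb0 | hbpos
  · rw [← hb0, add_zero, Real.zero_rpow (by positivity : (1:ℝ) + β ≠ 0),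
      Real.zero_rpow (by intro h; linarith [h] : (1:ℝ) + β - δ ≠ 0)]
    simp
  rcases eq_or_lt_of_le ha with ha0 | hapos
  · rw [← ha0]
    rw [Real.zero_rpow (by positivity : (1:ℝ) + β ≠ 0), Real.zero_rpow (by linarith : δ ≠ 0)]
    simp
  -- main case a, b > 0
  have key1 : (a + b) ^ (1 + β) - a ^ (1 + β) - b ^ (1 + β) ≤ (1 + β) * a * b ^ β :=
    keylem hβ0 hβ1 ha hb
  have key2 : (a + b) ^ (1 + β) - a ^ (1 + β) - b ^ (1 + β) ≤ (1 + β) * a ^ β * b := by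
    have := keylem hβ0 hβ1 hb ha
    have hcomm : b + a = a + b := add_comm b a
    rw [hcomm] at this
    linarith [this]
  rcases eq_or_lt_of_le hβ1 with hβeq | hβlt
  · -- β = 1, so δ = 1
    have hδ1 : δ = 1 := le_antisymm hδu (by linarith)
    subst hδ1
    have : (1:ℝ) + β - 1 = β := by ring
    rw [this, Real.rpow_one]
    exact key1
  -- β < 1, interpolate
  set F := (a + b) ^ (1 + β) - a ^ (1 + β) - b ^ (1 + β) with hF
  set θ := (δ - β) / (1 - β) with hθ
  have hθ0 : 0 ≤ θ := div_nonneg (by linarith) (by linarith)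
  have hθ1 : θ ≤ 1 := by
    rw [hθ, div_le_one (by linarith)]; linarith
  have hX : (0:ℝ) < (1 + β) * a * b ^ β := by positivity
  have hY : (0:ℝ) < (1 + β) * a ^ β * b := by positivity
  have hFsplit : F = F ^ θ * F ^ (1 - θ) := by
    rcases eq_or_lt_of_le hlow with h0 | hFpos
    · rcases eq_or_lt_of_le hθ0 with h | h
      · rw [← h0, ← h]; simp [Real.zero_rpow (by linarith : (1:ℝ) - 0 ≠ 0)]
      · rw [← h0, Real.zero_rpow (by linarith : θ ≠ 0)]; ring
    · rw [← Real.rpow_add hFpos]; simp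
  have h1 : F ^ θ ≤ ((1 + β) * a * b ^ β) ^ θ := Real.rpow_le_rpow hlow key1 hθ0
  have h2 : F ^ (1 - θ) ≤ ((1 + β) * a ^ β * b) ^ (1 - θ) :=
    Real.rpow_le_rpow hlow key2 (by linarith)
  have hmul : F ≤ ((1 + β) * a * b ^ β) ^ θ * ((1 + β) * a ^ β * b) ^ (1 - θ) := by
    rw [hFsplit]
    exact mul_le_mul h1 h2 (Real.rpow_nonneg hlow _) (Real.rpow_nonneg hX.le _)
  refine hmul.trans (le_of_eq ?_)
  rw [Real.mul_rpow (by positivity) (by positivity), Real.mul_rpow (by positivity) ha,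
      Real.mul_rpow (by positivity) hb, Real.mul_rpow (by positivity) (by positivity),
      ← Real.rpow_mul hb, ← Real.rpow_mul ha]
  have e1 : (1 + β) ^ θ * (1 + β) ^ (1 - θ) = 1 + β := by
    rw [← Real.rpow_add (by linarith)]; simp
  have hθβ : θ * (1 - β) = δ - β := by
    rw [hθ, div_mul_cancel₀ _ (by linarith : (1:ℝ) - β ≠ 0)]
  have e2 : a ^ θ * a ^ (β * (1 - θ)) = a ^ δ := by
    rw [← Real.rpow_add hapos]
    congr 1
    linear_combination hθβ
  have e3 : (b : ℝ) ^ (β * θ) * b ^ (1 - θ) = b ^ (1 + β - δ) := by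
    rw [← Real.rpow_add hbpos]
    congr 1
    linear_combination -hθβ
  calc (1 + β) ^ θ * a ^ θ * (b ^ (β * θ)) * ((1 + β) ^ (1 - θ) * a ^ (β * (1 - θ)) * b ^ (1 - θ))
      = ((1 + β) ^ θ * (1 + β) ^ (1 - θ)) * (a ^ θ * a ^ (β * (1 - θ))) * (b ^ (β * θ) * b ^ (1 - θ)) := by ring
    _ = (1 + β) * a ^ δ * b ^ (1 + β - δ) := by rw [e1, e2, e3]
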